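/- Let f ∈ C^∞(ℝ^{n+1}) be real-valued, λ ≥ 1, and set L_2 := λ (X_1 f) Σ_{j=1}^N X_j^* X_j. Then for every compact K ⊂ ℝ^{n+1} there exists C_K > 0, depending only on the L^∞(K)-norms of f, of the coefficients a_{jk}, and of their derivatives up to order 2, such that for all v ∈ C_0^∞(K): Im(L_2 v, v) ≥ λ Σ_{j=1}^N Re( ((-iX_1 f) X_j^* X_j v, v) - i ((X_j X_1 f) X_j v, v) ) - C_K ‖v‖_{L²}². -/

import Mathlib

open MeasureTheory

noncomputable section

namespace Carleman

/-- The ambient space `ℝ^{n+1}`. -/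
abbrev Spc (n : ℕ) : Type := EuclideanSpace ℝ (Fin (n + 1))

/-- Real coefficients `(a₁,…,a_{n+1})` of a first order operator on `ℝ^{n+1}`. -/
abbrev Coeffs (n : ℕ) : Type := Fin (n + 1) → Spc n → ℝ

variable {n : ℕ}

/-- `k`-th partial derivative `∂ₖ u`. -/
def pd (k : Fin (n + 1)) (u : Spc n → ℂ) (x : Spc n) : ℂ :=
  fderiv ℝ u x (EuclideanSpace.single k (1 : ℝ))

/-- The operator `X = ∑ₖ aₖ Dₖ`, with `Dₖ = -i ∂ₖ`. -/
def Xop (a : Coeffs n) (u : Spc n → ℂ) : Spc n → ℂ :=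
  fun x => ∑ k, (a k x : ℂ) * (-Complex.I * pd k u x)

/-- The function `d = ∑ₖ Dₖ aₖ`. -/
def dfun (a : Coeffs n) (x : Spc n) : ℂ :=
  ∑ k, -Complex.I * (fderiv ℝ (a k) x (EuclideanSpace.single k (1 : ℝ)) : ℂ)

/-- The formal `L²` adjoint `X^* = X + d`. -/
def Xstar (a : Coeffs n) (u : Spc n → ℂ) : Spc n → ℂ :=
  fun x => Xop a u x + dfun a x * u x

/-- All the coefficients are smooth. -/
def SmoothCoeffs (a : Coeffs n) : Prop := ∀ k, ContDiff ℝ (⊤ : ℕ∞) (a k)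

/-- `∑ⱼ Xⱼ^* Xⱼ u`. -/
def sumXsX {N : ℕ} (a : Fin N → Coeffs n) (u : Spc n → ℂ) : Spc n → ℂ :=
  fun x => ∑ j, Xstar (a j) (Xop (a j) u) x

/-- `P₁ = X₁ ∑ⱼ Xⱼ^* Xⱼ + X₀`, where `X₁ = X_{j₁}`. -/
def P1 {N : ℕ} (a0 : Coeffs n) (a : Fin N → Coeffs n) (j1 : Fin N) (u : Spc n → ℂ) :
    Spc n → ℂ :=
  fun x => Xop (a j1) (sumXsX a u) x + Xop a0 u x

/-- The formal adjoint `P₁^* = ∑ⱼ Xⱼ^* Xⱼ X₁^* + X₀^*`. -/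
def P1star {N : ℕ} (a0 : Coeffs n) (a : Fin N → Coeffs n) (j1 : Fin N) (u : Spc n → ℂ) :
    Spc n → ℂ :=
  fun x => (∑ j, Xstar (a j) (Xop (a j) (Xstar (a j1) u)) x) + Xstar a0 u x

/-- A smooth function with purely imaginary values. -/
def SmoothImag (g : Spc n → ℂ) : Prop := ContDiff ℝ (⊤ : ℕ∞) g ∧ ∀ x, (g x).re = 0

/-- `c` is a family of structure functions for the system `a`:
`[X_j, X_k] = ∑ₗ (c j k l) • Xₗ` as operators on smooth functions. -/
def IsInvolutiveWith {N : ℕ} (a : Fin N → Coeffs n)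
    (c : Fin N → Fin N → Fin N → Spc n → ℂ) : Prop :=
  (∀ j k l, SmoothImag (c j k l)) ∧
    ∀ j k, ∀ u : Spc n → ℂ, ContDiff ℝ (⊤ : ℕ∞) u → ∀ x,
      Xop (a j) (Xop (a k) u) x - Xop (a k) (Xop (a j) u) x = ∑ l, c j k l x * Xop (a l) u x

/-- Condition (H1): smooth real vector fields forming a globally involutive system. -/
def CondH1 {N : ℕ} (a : Fin N → Coeffs n) : Prop :=
  (∀ j, SmoothCoeffs (a j)) ∧ ∃ c, IsInvolutiveWith a c

/-- `C₀^∞(K)`: smooth functions supported in the compact set `K`. -/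
def TestOn (K : Set (Spc n)) (u : Spc n → ℂ) : Prop :=
  ContDiff ℝ (⊤ : ℕ∞) u ∧ tsupport u ⊆ K

/-- The weighted function `e^{λ f} u`. -/
def expw (lam : ℝ) (f : Spc n → ℝ) (u : Spc n → ℂ) : Spc n → ℂ :=
  fun x => (Real.exp (lam * f x) : ℂ) * u x

/-- The `L²(ℝ^{n+1})` inner product `(u, v) = ∫ u v̄`. -/
def ip (u v : Spc n → ℂ) : ℂ := ∫ x : Spc n, u x * (starRingEnd ℂ) (v x)

/-- The squared `L²(ℝ^{n+1})` norm. -/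
def l2sq (u : Spc n → ℂ) : ℝ := ∫ x : Spc n, ‖u x‖ ^ 2

/-- The squared Sobolev `H^s(ℝ^{n+1})` norm, via the Fourier transform. -/
def hsSq (s : ℝ) (u : Spc n → ℂ) : ℝ :=
  ∫ ξ : Spc n, (1 + ‖ξ‖ ^ 2) ^ s * ‖VectorFourier.fourierIntegral Real.fourierChar volume (innerₗ (Spc n)) u ξ‖ ^ 2

/-- The real valued function `-iX₁f` (for `f` real valued). -/
def mIXf (a1 : Coeffs n) (f : Spc n → ℝ) (x : Spc n) : ℝ :=
  (-Complex.I * Xop a1 (fun y => (f y : ℂ)) x).re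

/-- The coefficient vector of the real vector field `iX` attached to `a`. -/
def coeffVF (a : Coeffs n) : Spc n → Spc n :=
  fun x => (EuclideanSpace.equiv (Fin (n + 1)) ℝ).symm fun k => a k x

/-- Lie bracket of vector fields. -/
def vfLie (V W : Spc n → Spc n) : Spc n → Spc n :=
  fun x => fderiv ℝ W x (V x) - fderiv ℝ V x (W x)

/-- Iterated commutators of length `m` of the system of vector fields `V`. -/
inductive IsBracket {N : ℕ} (V : Fin N → Spc n → Spc n) : ℕ → (Spc n → Spc n) → Prop
  | base (j : Fin N) : IsBracket V 1 (V j)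
  | lie {p q : ℕ} {W₁ W₂ : Spc n → Spc n} :
      IsBracket V p W₁ → IsBracket V q W₂ → IsBracket V (p + q) (vfLie W₁ W₂)

/-- Hörmander's condition of rank `r`: the vector fields `iX_j` together with their
iterated commutators of length up to `r` span the whole space at every point. -/
def Hormander {N : ℕ} (a : Fin N → Coeffs n) (r : ℕ) : Prop :=
  ∀ x : Spc n,
    Submodule.span ℝ
      {w : Spc n | ∃ m, m ≤ r ∧ ∃ W, IsBracket (fun j => coeffVF (a j)) m W ∧ w = W x} = ⊤

/-- Membership in `L²_loc(ℝ^{n+1})`. -/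
def MemL2loc (g : Spc n → ℂ) : Prop :=
  AEStronglyMeasurable g volume ∧
    ∀ K : Set (Spc n), IsCompact K → IntegrableOn (fun x => ‖g x‖ ^ 2) K volume

/-- Membership in `H^s_loc(ℝ^{n+1})` (`s ≥ 0`), via the Fourier transform. -/
def MemHsLoc (s : ℝ) (g : Spc n → ℂ) : Prop :=
  AEStronglyMeasurable g volume ∧
    ∀ χ : Spc n → ℝ, ContDiff ℝ (⊤ : ℕ∞) χ → HasCompactSupport χ →
      Integrable (fun x => (χ x : ℂ) * g x) volume ∧
        (∫⁻ ξ : Spc n,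
            ENNReal.ofReal ((1 + ‖ξ‖ ^ 2) ^ s) *
              (‖VectorFourier.fourierIntegral Real.fourierChar volume (innerₗ (Spc n))
                (fun x => (χ x : ℂ) * g x) ξ‖₊ : ENNReal) ^ 2) < ⊤

/-- `u` solves `P u = g` weakly on the open set `U`, where `Padj` is the formal
adjoint of `P`: for all test functions `φ` compactly supported in `U`,
`(u, Padj φ) = (g, φ)`. -/
def WeakEqOn (Padj : (Spc n → ℂ) → Spc n → ℂ) (u g : Spc n → ℂ) (U : Set (Spc n)) : Prop :=
  ∀ φ : Spc n → ℂ, ContDiff ℝ (⊤ : ℕ∞) φ → HasCompactSupport φ → tsupport φ ⊆ U →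
    ∫ x : Spc n, u x * (starRingEnd ℂ) (Padj φ x) = ∫ x : Spc n, g x * (starRingEnd ℂ) (φ x)

/-- The operator `P` whose formal adjoint is `Padj` is locally solvable at `x₀`, with data in
the class `S` and solutions in the class `T`: there is a compact set `K` containing `x₀` in its
interior such that for every `g ∈ S` there is `u ∈ T` with `P u = g` (weakly) in the interior
of `K`. -/
def LocSolvAt (Padj : (Spc n → ℂ) → Spc n → ℂ) (S T : (Spc n → ℂ) → Prop)
    (x₀ : Spc n) : Prop :=
  ∃ K : Set (Spc n), IsCompact K ∧ x₀ ∈ interior K ∧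
    ∀ g, S g → ∃ u, T u ∧ WeakEqOn Padj u g (interior K)


/-- `c'_j = ∑ₖ ( ∑ₗ c^{lk}_j + (X_k c_j^{k1}) + d_k c_j^{k1} - 2 d_k c_k^{j1} )`,
where `c^{jk}_l` is coded as `c j k l` and `j1` is the index of `X₁`. -/
def cprime {N : ℕ} (a : Fin N → Coeffs n) (c : Fin N → Fin N → Fin N → Spc n → ℂ)
    (j1 j : Fin N) (x : Spc n) : ℂ :=
  ∑ k, ((∑ l, c l k j x) + Xop (a k) (c k j1 j) x + dfun (a k) x * c k j1 j x -
    2 * dfun (a k) x * c j j1 k x)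

/-- `c''_j = ∑ₖ ( (X_k c_k^{j1}) + (X_k^* c_k^{j1}) + (X_k c_j^{k1}) + (X_k^* c_j^{k1}) )`. -/
def cdprime {N : ℕ} (a : Fin N → Coeffs n) (c : Fin N → Fin N → Fin N → Spc n → ℂ)
    (j1 j : Fin N) (x : Spc n) : ℂ :=
  ∑ k, (Xop (a k) (c j j1 k) x + Xstar (a k) (c j j1 k) x +
    Xop (a k) (c k j1 j) x + Xstar (a k) (c k j1 j) x)

/-- The second order operator
`Q_j = (λ(-iX₁f) + i d₁/2) X_j^* X_j + ∑ₖ i c^{j1}_k X_k^* X_j - iλ (X_jX₁f) X_j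
      + (i/2)(c'_j - (X₁d_j) + 2(X_jd₁) + d₁d_j) X_j`. -/
def Qop {N : ℕ} (a : Fin N → Coeffs n) (c : Fin N → Fin N → Fin N → Spc n → ℂ)
    (j1 : Fin N) (f : Spc n → ℝ) (lam : ℝ) (j : Fin N) (v : Spc n → ℂ) (x : Spc n) : ℂ :=
  ((lam : ℂ) * (-Complex.I * Xop (a j1) (fun y => (f y : ℂ)) x) +
        Complex.I * dfun (a j1) x / 2) * Xstar (a j) (Xop (a j) v) x +
    (∑ k, Complex.I * c j j1 k x * Xstar (a k) (Xop (a j) v) x) -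
    Complex.I * (lam : ℂ) * Xop (a j) (Xop (a j1) (fun y => (f y : ℂ))) x * Xop (a j) v x +
    Complex.I / 2 *
      (cprime a c j1 j x - Xop (a j1) (dfun (a j)) x + 2 * Xop (a j) (dfun (a j1)) x +
        dfun (a j1) x * dfun (a j) x) * Xop (a j) v x

/-- The second order operator
`Q'_j = (λ(-iX₁f) + i d₁/2) X_j^* X_j - ∑ₖ i c^{j1}_k X_j^* X_k - iλ (X_jX₁f) X_j
      + (i/2)(c'_j - c''_j - (X₁d_j) + 2(X_jd₁) + d₁d_j) X_j`. -/
def Qop' {N : ℕ} (a : Fin N → Coeffs n) (c : Fin N → Fin N → Fin N → Spc n → ℂ)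
    (j1 : Fin N) (f : Spc n → ℝ) (lam : ℝ) (j : Fin N) (v : Spc n → ℂ) (x : Spc n) : ℂ :=
  ((lam : ℂ) * (-Complex.I * Xop (a j1) (fun y => (f y : ℂ)) x) +
        Complex.I * dfun (a j1) x / 2) * Xstar (a j) (Xop (a j) v) x -
    (∑ k, Complex.I * c j j1 k x * Xstar (a j) (Xop (a k) v) x) -
    Complex.I * (lam : ℂ) * Xop (a j) (Xop (a j1) (fun y => (f y : ℂ))) x * Xop (a j) v x +
    Complex.I / 2 *
      (cprime a c j1 j x - cdprime a c j1 j x - Xop (a j1) (dfun (a j)) x +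
        2 * Xop (a j) (dfun (a j1)) x + dfun (a j1) x * dfun (a j) x) * Xop (a j) v x

/-- The coefficient of the first order operator
`L₁ = ∑ⱼ [ λ dⱼ(Xⱼf) + λ(Xⱼ²f) - λ²(Xⱼf)² ] X₁`. -/
def L1coef {N : ℕ} (a : Fin N → Coeffs n) (f : Spc n → ℝ) (lam : ℝ) (x : Spc n) : ℂ :=
  ∑ j, ((lam : ℂ) * dfun (a j) x * Xop (a j) (fun y => (f y : ℂ)) x +
    (lam : ℂ) * Xop (a j) (Xop (a j) (fun y => (f y : ℂ))) x -
    (lam : ℂ) ^ 2 * Xop (a j) (fun y => (f y : ℂ)) x ^ 2)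

/-- The multiplication operator
`L₀ = ∑ⱼ [ λ(X₁dⱼ)(Xⱼf) + λ dⱼ(X₁Xⱼf) + λ(X₁Xⱼ²f) - 2λ²(Xⱼf)(X₁Xⱼf)
      + (X₁f)(λ² dⱼ(Xⱼf) + λ²(Xⱼ²f) + λ³(iXⱼf)²) ] + λ(X₀f)`. -/
def L0coef {N : ℕ} (a0 : Coeffs n) (a : Fin N → Coeffs n) (j1 : Fin N) (f : Spc n → ℝ)
    (lam : ℝ) (x : Spc n) : ℂ :=
  (∑ j, ((lam : ℂ) * Xop (a j1) (dfun (a j)) x * Xop (a j) (fun y => (f y : ℂ)) x +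
      (lam : ℂ) * dfun (a j) x * Xop (a j1) (Xop (a j) (fun y => (f y : ℂ))) x +
      (lam : ℂ) * Xop (a j1) (Xop (a j) (Xop (a j) (fun y => (f y : ℂ)))) x -
      2 * (lam : ℂ) ^ 2 * Xop (a j) (fun y => (f y : ℂ)) x *
        Xop (a j1) (Xop (a j) (fun y => (f y : ℂ))) x +
      Xop (a j1) (fun y => (f y : ℂ)) x *
        ((lam : ℂ) ^ 2 * dfun (a j) x * Xop (a j) (fun y => (f y : ℂ)) x +
          (lam : ℂ) ^ 2 * Xop (a j) (Xop (a j) (fun y => (f y : ℂ))) x +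
          (lam : ℂ) ^ 3 * (Complex.I * Xop (a j) (fun y => (f y : ℂ)) x) ^ 2))) +
    (lam : ℂ) * Xop a0 (fun y => (f y : ℂ)) x

section Stmt10Aux

lemma contDiff_fderiv_apply {F : Type*} [NormedAddCommGroup F] [NormedSpace ℝ F]
    {u : Spc n → F} (hu : ContDiff ℝ (⊤ : ℕ∞) u) (e : Spc n) :
    ContDiff ℝ (⊤ : ℕ∞) (fun x => fderiv ℝ u x e) :=
  (hu.fderiv_right (by simp)).clm_apply contDiff_const

lemma contDiff_pd {u : Spc n → ℂ} (hu : ContDiff ℝ (⊤ : ℕ∞) u) (k : Fin (n + 1)) :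
    ContDiff ℝ (⊤ : ℕ∞) (pd k u) :=
  contDiff_fderiv_apply hu _

lemma contDiff_ofReal {h : Spc n → ℝ} (hh : ContDiff ℝ (⊤ : ℕ∞) h) :
    ContDiff ℝ (⊤ : ℕ∞) (fun x => (h x : ℂ)) :=
  Complex.ofRealCLM.contDiff.comp hh

lemma contDiff_Xop {a : Coeffs n} (ha : SmoothCoeffs a) {u : Spc n → ℂ}
    (hu : ContDiff ℝ (⊤ : ℕ∞) u) : ContDiff ℝ (⊤ : ℕ∞) (Xop a u) := by
  unfold Xop
  exact ContDiff.sum fun k _ =>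
    (contDiff_ofReal (ha k)).mul (contDiff_const.mul (contDiff_pd hu k))

lemma contDiff_dfun {a : Coeffs n} (ha : SmoothCoeffs a) :
    ContDiff ℝ (⊤ : ℕ∞) (dfun a) := by
  unfold dfun
  exact ContDiff.sum fun k _ =>
    contDiff_const.mul (contDiff_ofReal (contDiff_fderiv_apply (ha k) _))

lemma contDiff_Xstar {a : Coeffs n} (ha : SmoothCoeffs a) {u : Spc n → ℂ}
    (hu : ContDiff ℝ (⊤ : ℕ∞) u) : ContDiff ℝ (⊤ : ℕ∞) (Xstar a u) := by
  unfold Xstar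
  exact (contDiff_Xop ha hu).add ((contDiff_dfun ha).mul hu)

lemma fderiv_ofReal_apply {h : Spc n → ℝ} {x : Spc n} (hh : DifferentiableAt ℝ h x)
    (e : Spc n) : fderiv ℝ (fun y => (h y : ℂ)) x e = (fderiv ℝ h x e : ℂ) := by
  have : fderiv ℝ (fun y => (h y : ℂ)) x = Complex.ofRealCLM.comp (fderiv ℝ h x) :=
    (Complex.ofRealCLM.hasFDerivAt.comp x hh.hasFDerivAt).fderiv
  rw [this]; rfl

lemma integral_complex_im {f : Spc n → ℂ} (hf : Integrable f volume) :
    (∫ x, f x).im = ∫ x, (f x).im :=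
  (Complex.imCLM.integral_comp_comm hf).symm

end Stmt10Aux

/-- for `L₂ = λ(X₁f)∑ⱼXⱼ^*Xⱼ`,
`Im(L₂v, v) ≥ λ∑ⱼ Re( ((-iX₁f)Xⱼ^*Xⱼv, v) - i((XⱼX₁f)Xⱼv, v) ) - C_K‖v‖²`. -/
theorem stmt10 (n N : ℕ) (hN : 0 < N)
    (a : Fin N → Coeffs n) (ha : ∀ j, SmoothCoeffs (a j))
    (f : Spc n → ℝ) (hf : ContDiff ℝ (⊤ : ℕ∞) f)
    (lam : ℝ) (hlam : 1 ≤ lam)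
    (K : Set (Spc n)) (hK : IsCompact K) :
    ∃ CK : ℝ, 0 < CK ∧ ∀ v : Spc n → ℂ, TestOn K v →
      lam * (∑ j,
          ((ip (fun x => (-Complex.I * Xop (a ⟨0, hN⟩) (fun y => (f y : ℂ)) x) *
                Xstar (a j) (Xop (a j) v) x) v) -
            Complex.I * ip (fun x =>
                Xop (a j) (Xop (a ⟨0, hN⟩) (fun y => (f y : ℂ))) x * Xop (a j) v x) v).re) -
          CK * l2sq v ≤
        (ip (fun x => (lam : ℂ) * Xop (a ⟨0, hN⟩) (fun y => (f y : ℂ)) x * sumXsX a v x)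
          v).im := by
  classical
  set j1 : Fin N := ⟨0, hN⟩ with hj1def
  set fC : Spc n → ℂ := fun y => (f y : ℂ) with hfCdef
  set g : Spc n → ℂ := Xop (a j1) fC with hgdef
  have hfd : Differentiable ℝ f := hf.differentiable (by simp)
  have hgC : ContDiff ℝ (⊤ : ℕ∞) g := contDiff_Xop (ha j1) (contDiff_ofReal hf)
  set r : Spc n → ℝ := fun x => ∑ k, a j1 k x * fderiv ℝ f x (EuclideanSpace.single k 1)
    with hrdef
  have hrC : ContDiff ℝ (⊤ : ℕ∞) r :=
    ContDiff.sum fun k _ => (ha j1 k).mul (contDiff_fderiv_apply hf _)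
  have hrd : Differentiable ℝ r := hrC.differentiable (by simp)
  have hg_eq : ∀ x, g x = -Complex.I * ((r x : ℝ) : ℂ) := by
    intro x
    calc g x = ∑ k, (a j1 k x : ℂ) *
        (-Complex.I * fderiv ℝ (fun y => (f y : ℂ)) x (EuclideanSpace.single k (1:ℝ))) := by
          rw [hgdef]; simp only [Xop, pd, hfCdef]
      _ = ∑ k, -Complex.I *
          ((a j1 k x * fderiv ℝ f x (EuclideanSpace.single k (1:ℝ)) : ℝ) : ℂ) := by
          refine Finset.sum_congr rfl fun k _ => ?_
          rw [fderiv_ofReal_apply (hfd x)]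
          push_cast; ring
      _ = -Complex.I * ((r x : ℝ) : ℂ) := by
          rw [← Finset.mul_sum, hrdef]; norm_cast
  set w : Fin N → Spc n → ℝ :=
    fun j x => -∑ k, a j k x * fderiv ℝ r x (EuclideanSpace.single k 1) with hwdef
  have hwC : ∀ j, ContDiff ℝ (⊤ : ℕ∞) (w j) := fun j =>
    (ContDiff.sum fun k _ => (ha j k).mul (contDiff_fderiv_apply hrC _)).neg
  have hq : ∀ j x, Xop (a j) g x = ((w j x : ℝ) : ℂ) := by
    intro j x
    have hpd : ∀ k : Fin (n+1), pd k g x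
        = -Complex.I * ((fderiv ℝ r x (EuclideanSpace.single k (1:ℝ)) : ℝ) : ℂ) := by
      intro k
      have hgfun : g = fun y => -Complex.I * ((r y : ℝ) : ℂ) := funext hg_eq
      rw [hgfun]
      simp only [pd]
      rw [fderiv_const_mul ((contDiff_ofReal hrC).differentiable (by simp) x) (-Complex.I)]
      simp [fderiv_ofReal_apply (hrd x)]
    calc Xop (a j) g x = ∑ k, (a j k x : ℂ) * (-Complex.I * pd k g x) := rfl
      _ = ∑ k, -((a j k x * fderiv ℝ r x (EuclideanSpace.single k (1:ℝ)) : ℝ) : ℂ) := by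
          refine Finset.sum_congr rfl fun k _ => ?_
          rw [hpd k]; push_cast; ring_nf; rw [Complex.I_sq]; ring
      _ = ((w j x : ℝ) : ℂ) := by
          rw [hwdef]; push_cast; rw [← Finset.sum_neg_distrib]
  set ψ : Fin N → Fin (n+1) → Spc n → ℝ := fun j k x => w j x * a j k x with hψdef
  have hψC : ∀ j k, ContDiff ℝ (⊤ : ℕ∞) (ψ j k) := fun j k => (hwC j).mul (ha j k)
  set Φ : Spc n → ℝ :=
    fun x => ∑ j, ∑ k, |fderiv ℝ (ψ j k) x (EuclideanSpace.single k 1)| with hΦdef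
  have hΦcont : Continuous Φ := by
    refine continuous_finset_sum _ fun j _ => continuous_finset_sum _ fun k _ => ?_
    exact (contDiff_fderiv_apply (hψC j k) _).continuous.abs
  obtain ⟨C, hC⟩ := hK.exists_bound_of_continuousOn hΦcont.continuousOn
  set M : ℝ := max C 0 with hMdef
  have hM0 : (0:ℝ) ≤ M := le_max_right _ _
  have hlam0 : (0:ℝ) < lam := lt_of_lt_of_le one_pos hlam
  have hprod0 : 0 ≤ lam * ((N:ℝ) * (((n:ℝ)+1) * M)) :=
    mul_nonneg hlam0.le (mul_nonneg (Nat.cast_nonneg N)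
      (mul_nonneg (by positivity) hM0))
  refine ⟨1 + lam * ((N:ℝ) * (((n:ℝ)+1) * M)), by linarith, ?_⟩
  rintro v ⟨hv, hsupp⟩
  have hvcont : Continuous v := hv.continuous
  have hvcs : HasCompactSupport v :=
    IsCompact.of_isClosed_subset hK (isClosed_tsupport v) hsupp
  have hconjcont : Continuous fun x => (starRingEnd ℂ) (v x) := by
    exact Complex.continuous_conj.comp hvcont
  have key_cs : HasCompactSupport fun x => (starRingEnd ℂ) (v x) :=
    hvcs.comp_left (map_zero _)
  have key_int : ∀ h : Spc n → ℂ, Continuous h →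
      Integrable (fun x => h x * (starRingEnd ℂ) (v x)) volume := fun h hh =>
    (hh.mul hconjcont).integrable_of_hasCompactSupport key_cs.mul_left
  have hTcont : ∀ j, Continuous (Xstar (a j) (Xop (a j) v)) := fun j =>
    (contDiff_Xstar (ha j) (contDiff_Xop (ha j) hv)).continuous
  set y : Fin N → ℂ :=
    fun j => ∫ x, g x * Xstar (a j) (Xop (a j) v) x * (starRingEnd ℂ) (v x) with hydef
  have hyint : ∀ j, Integrable
      (fun x => g x * Xstar (a j) (Xop (a j) v) x * (starRingEnd ℂ) (v x)) volume :=
    fun j => key_int _ (hgC.continuous.mul (hTcont j))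
  -- Step 1 : imaginary part of the main term
  have hZ : (ip (fun x => (lam : ℂ) * g x * sumXsX a v x) v).im = lam * ∑ j, (y j).im := by
    have h1 : (fun x => ((lam : ℂ) * g x * sumXsX a v x) * (starRingEnd ℂ) (v x))
        = fun x => ∑ j, (lam : ℂ) *
            (g x * Xstar (a j) (Xop (a j) v) x * (starRingEnd ℂ) (v x)) := by
      funext x
      simp only [sumXsX, Finset.mul_sum, Finset.sum_mul]
      exact Finset.sum_congr rfl fun j _ => by ring
    have h2 : ip (fun x => (lam : ℂ) * g x * sumXsX a v x) v = ∑ j, (lam : ℂ) * y j := by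
      show (∫ x, ((lam : ℂ) * g x * sumXsX a v x) * (starRingEnd ℂ) (v x)) = _
      rw [h1, integral_finset_sum _ fun j _ => (hyint j).const_mul _]
      exact Finset.sum_congr rfl fun j _ => integral_const_mul _ _
    rw [h2, Complex.im_sum]
    rw [Finset.mul_sum]
    exact Finset.sum_congr rfl fun j _ => by simp [Complex.mul_im]
  -- Step 2 : the A-terms
  have hA : ∀ j, (ip (fun x => (-Complex.I * g x) * Xstar (a j) (Xop (a j) v) x) v).re
      = (y j).im := by
    intro j
    have h1 : ip (fun x => (-Complex.I * g x) * Xstar (a j) (Xop (a j) v) x) v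
        = -Complex.I * y j := by
      show (∫ x, ((-Complex.I * g x) * Xstar (a j) (Xop (a j) v) x) * (starRingEnd ℂ) (v x)) = _
      rw [show (fun x => ((-Complex.I * g x) * Xstar (a j) (Xop (a j) v) x) *
          (starRingEnd ℂ) (v x)) = fun x => -Complex.I *
            (g x * Xstar (a j) (Xop (a j) v) x * (starRingEnd ℂ) (v x)) from
        funext fun x => by ring]
      rw [integral_const_mul]
    rw [h1]; simp
  -- the function m = |v|²
  set m : Spc n → ℝ := fun x => (v x).re * (v x).re + (v x).im * (v x).im with hmdef
  have hmC : ContDiff ℝ (⊤ : ℕ∞) m := by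
    have hre : ContDiff ℝ (⊤ : ℕ∞) fun x => (v x).re := Complex.reCLM.contDiff.comp hv
    have him : ContDiff ℝ (⊤ : ℕ∞) fun x => (v x).im := Complex.imCLM.contDiff.comp hv
    exact (hre.mul hre).add (him.mul him)
  have hmcs : HasCompactSupport m :=
    hvcs.comp_left (g := fun z : ℂ => z.re * z.re + z.im * z.im) (by simp)
  have hmnn : ∀ x, 0 ≤ m x := fun x =>
    add_nonneg (mul_self_nonneg _) (mul_self_nonneg _)
  have hmint : Integrable m volume :=
    hmC.continuous.integrable_of_hasCompactSupport hmcs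
  have hmeq : ∀ x, ‖v x‖^2 = m x := fun x => by
    simp only [hmdef]; rw [Complex.sq_norm]; rfl
  have hl2 : l2sq v = ∫ x, m x := by
    simp only [l2sq]
    exact integral_congr_ae (Filter.Eventually.of_forall hmeq)
  have hl2nn : 0 ≤ l2sq v := by
    rw [hl2]; exact integral_nonneg hmnn
  have hmfd : ∀ x (e : Spc n), fderiv ℝ m x e
      = 2 * (fderiv ℝ v x e * (starRingEnd ℂ) (v x)).re := by
    intro x e
    have hvx : HasFDerivAt v (fderiv ℝ v x) x := (hv.differentiable (by simp) x).hasFDerivAt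
    have hre : HasFDerivAt (fun y => (v y).re) (Complex.reCLM.comp (fderiv ℝ v x)) x :=
      Complex.reCLM.hasFDerivAt.comp x hvx
    have him : HasFDerivAt (fun y => (v y).im) (Complex.imCLM.comp (fderiv ℝ v x)) x :=
      Complex.imCLM.hasFDerivAt.comp x hvx
    have hm' : HasFDerivAt m
        (((v x).re • (Complex.reCLM.comp (fderiv ℝ v x)) +
          (v x).re • (Complex.reCLM.comp (fderiv ℝ v x))) +
         ((v x).im • (Complex.imCLM.comp (fderiv ℝ v x)) +
          (v x).im • (Complex.imCLM.comp (fderiv ℝ v x)))) x :=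
      (hre.mul hre).add (him.mul him)
    rw [hm'.fderiv]
    simp [Complex.mul_re]
    ring
  have hcs_fm : ∀ e : Spc n, HasCompactSupport fun x => fderiv ℝ m x e := fun e =>
    (hmcs.fderiv ℝ).comp_left (g := fun L : (Spc n) →L[ℝ] ℝ => L e) (by simp)
  -- pointwise identity for the B-terms
  have hpoint : ∀ j x, (Xop (a j) g x * Xop (a j) v x * (starRingEnd ℂ) (v x)).im
      = ∑ k, (-(1/2:ℝ)) * (ψ j k x * fderiv ℝ m x (EuclideanSpace.single k 1)) := by
    intro j x
    rw [show Xop (a j) g x * Xop (a j) v x * (starRingEnd ℂ) (v x)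
        = ∑ k, ((w j x : ℝ) : ℂ) * ((a j k x : ℂ) * (-Complex.I * pd k v x)) *
            (starRingEnd ℂ) (v x) from by
      rw [hq j x]
      show ((w j x : ℝ) : ℂ) * (∑ k, (a j k x : ℂ) * (-Complex.I * pd k v x)) *
          (starRingEnd ℂ) (v x) = _
      rw [Finset.mul_sum, Finset.sum_mul]]
    rw [Complex.im_sum]
    refine Finset.sum_congr rfl fun k _ => ?_
    rw [hmfd x (EuclideanSpace.single k 1)]
    simp only [hψdef, pd]
    simp [Complex.mul_im, Complex.mul_re]
    ring
  have hint_fm : ∀ (j : Fin N) (k : Fin (n+1)), Integrable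
      (fun x => ψ j k x * fderiv ℝ m x (EuclideanSpace.single k 1)) volume := fun j k =>
    ((hψC j k).continuous.mul (contDiff_fderiv_apply hmC _).continuous
      ).integrable_of_hasCompactSupport (hcs_fm _).mul_left
  have hint_fψ : ∀ (j : Fin N) (k : Fin (n+1)), Integrable
      (fun x => fderiv ℝ (ψ j k) x (EuclideanSpace.single k 1) * m x) volume := fun j k =>
    ((contDiff_fderiv_apply (hψC j k) _).continuous.mul hmC.continuous
      ).integrable_of_hasCompactSupport hmcs.mul_left
  have hB : ∀ j, (ip (fun x => Xop (a j) g x * Xop (a j) v x) v).im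
      = ∑ k, (-(1/2:ℝ)) * ∫ x, ψ j k x * fderiv ℝ m x (EuclideanSpace.single k 1) := by
    intro j
    have hint : Integrable
        (fun x => Xop (a j) g x * Xop (a j) v x * (starRingEnd ℂ) (v x)) volume :=
      key_int _ ((contDiff_Xop (ha j) hgC).continuous.mul (contDiff_Xop (ha j) hv).continuous)
    have h0 : ip (fun x => Xop (a j) g x * Xop (a j) v x) v
        = ∫ x, Xop (a j) g x * Xop (a j) v x * (starRingEnd ℂ) (v x) := rfl
    rw [h0, integral_complex_im hint]
    rw [show (fun x => (Xop (a j) g x * Xop (a j) v x * (starRingEnd ℂ) (v x)).im)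
        = fun x => ∑ k, (-(1/2:ℝ)) *
            (ψ j k x * fderiv ℝ m x (EuclideanSpace.single k 1)) from
      funext fun x => hpoint j x]
    rw [integral_finset_sum _ fun k _ => (hint_fm j k).const_mul _]
    exact Finset.sum_congr rfl fun k _ => integral_const_mul _ _
  -- integration by parts
  have hIBP : ∀ (j : Fin N) (k : Fin (n+1)),
      ∫ x, ψ j k x * fderiv ℝ m x (EuclideanSpace.single k 1)
      = -∫ x, fderiv ℝ (ψ j k) x (EuclideanSpace.single k 1) * m x := by
    intro j k
    refine integral_mul_fderiv_eq_neg_fderiv_mul_of_integrable (hint_fψ j k) (hint_fm j k)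
      (((hψC j k).continuous.mul hmC.continuous).integrable_of_hasCompactSupport
        hmcs.mul_left)
      (fun x _ => (hψC j k).differentiable (by simp) x) (fun x _ => hmC.differentiable (by simp) x)
  -- the bound
  have hbound : ∀ (j : Fin N) (k : Fin (n+1)),
      ∫ x, fderiv ℝ (ψ j k) x (EuclideanSpace.single k 1) * m x ≤ M * l2sq v := by
    intro j k
    have hle : ∀ x, fderiv ℝ (ψ j k) x (EuclideanSpace.single k 1) * m x ≤ M * m x := by
      intro x
      by_cases hx : x ∈ K
      · have h3 : |fderiv ℝ (ψ j k) x (EuclideanSpace.single k 1)| ≤ Φ x := by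
          have t1 : |fderiv ℝ (ψ j k) x (EuclideanSpace.single k 1)|
              ≤ ∑ k', |fderiv ℝ (ψ j k') x (EuclideanSpace.single k' 1)| :=
            Finset.single_le_sum (f := fun k' =>
              |fderiv ℝ (ψ j k') x (EuclideanSpace.single k' 1)|)
              (fun i _ => abs_nonneg _) (Finset.mem_univ k)
          have t2 : (∑ k', |fderiv ℝ (ψ j k') x (EuclideanSpace.single k' 1)|) ≤ Φ x := by
            simp only [hΦdef]
            exact Finset.single_le_sum (f := fun j' => ∑ k',
              |fderiv ℝ (ψ j' k') x (EuclideanSpace.single k' 1)|)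
              (fun i _ => Finset.sum_nonneg fun _ _ => abs_nonneg _) (Finset.mem_univ j)
          linarith
        have h1 : |fderiv ℝ (ψ j k) x (EuclideanSpace.single k 1)| ≤ M := by
          have h2 := hC x hx
          rw [Real.norm_eq_abs] at h2
          have := le_abs_self (Φ x)
          have := le_max_left C (0:ℝ)
          linarith
        have hm0 := hmnn x
        calc fderiv ℝ (ψ j k) x (EuclideanSpace.single k 1) * m x
            ≤ |fderiv ℝ (ψ j k) x (EuclideanSpace.single k 1)| * m x :=
              mul_le_mul_of_nonneg_right (le_abs_self _) hm0
          _ ≤ M * m x := mul_le_mul_of_nonneg_right h1 hm0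
      · have hv0 : v x = 0 := image_eq_zero_of_notMem_tsupport fun hmem => hx (hsupp hmem)
        have hm0 : m x = 0 := by simp [hmdef, hv0]
        rw [hm0]; simp
    calc ∫ x, fderiv ℝ (ψ j k) x (EuclideanSpace.single k 1) * m x
        ≤ ∫ x, M * m x := integral_mono (hint_fψ j k) (hmint.const_mul M) hle
      _ = M * l2sq v := by rw [integral_const_mul, hl2]
  -- sum up the B-terms
  have hBle : ∀ j, (ip (fun x => Xop (a j) g x * Xop (a j) v x) v).im
      ≤ ((n:ℝ)+1) * (M * l2sq v) := by
    intro j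
    rw [hB j]
    have hMl2 : 0 ≤ M * l2sq v := mul_nonneg hM0 hl2nn
    have hk : ∀ k : Fin (n+1), (-(1/2:ℝ)) *
        (∫ x, ψ j k x * fderiv ℝ m x (EuclideanSpace.single k 1)) ≤ M * l2sq v := by
      intro k
      rw [hIBP j k]
      have := hbound j k
      linarith
    calc (∑ k : Fin (n+1), (-(1/2:ℝ)) *
          ∫ x, ψ j k x * fderiv ℝ m x (EuclideanSpace.single k 1))
        ≤ ∑ _k : Fin (n+1), M * l2sq v := Finset.sum_le_sum fun k _ => hk k
      _ = ((n:ℝ)+1) * (M * l2sq v) := by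
          rw [Finset.sum_const, Finset.card_univ, Fintype.card_fin, nsmul_eq_mul]
          push_cast; ring
  have hSB : (∑ j, (ip (fun x => Xop (a j) g x * Xop (a j) v x) v).im)
      ≤ (N:ℝ) * (((n:ℝ)+1) * (M * l2sq v)) := by
    calc (∑ j, (ip (fun x => Xop (a j) g x * Xop (a j) v x) v).im)
        ≤ ∑ _j : Fin N, ((n:ℝ)+1) * (M * l2sq v) := Finset.sum_le_sum fun j _ => hBle j
      _ = (N:ℝ) * (((n:ℝ)+1) * (M * l2sq v)) := by
          rw [Finset.sum_const, Finset.card_univ, Fintype.card_fin, nsmul_eq_mul]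
  -- final assembly
  have hre_sum : (∑ j, ((ip (fun x => (-Complex.I * g x) * Xstar (a j) (Xop (a j) v) x) v) -
        Complex.I * ip (fun x => Xop (a j) g x * Xop (a j) v x) v).re)
      = (∑ j, (y j).im) + ∑ j, (ip (fun x => Xop (a j) g x * Xop (a j) v x) v).im := by
    rw [← Finset.sum_add_distrib]
    refine Finset.sum_congr rfl fun j _ => ?_
    rw [Complex.sub_re, hA j]
    simp [Complex.mul_re]
  rw [hZ, hre_sum]
  have hfin : lam * ((N:ℝ) * (((n:ℝ)+1) * (M * l2sq v))) + l2sq v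
      = (1 + lam * ((N:ℝ) * (((n:ℝ)+1) * M))) * l2sq v := by ring
  have hSB' : lam * (∑ j, (ip (fun x => Xop (a j) g x * Xop (a j) v x) v).im)
      ≤ lam * ((N:ℝ) * (((n:ℝ)+1) * (M * l2sq v))) :=
    mul_le_mul_of_nonneg_left hSB hlam0.le
  nlinarith [hSB', hfin, hl2nn]

end Carleman
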